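/- Every finite monoid that is both R-trivial and a block-group is J-trivial. -/
import Mathlib


/-- A monoid is `R`-trivial if `a M = b M` implies `a = b`. -/
def IsRTrivial (M : Type*) [Monoid M] : Prop :=
  ∀ a b : M, (Set.range fun x => a * x) = (Set.range fun x => b * x) → a = b

/-- A monoid is `J`-trivial if `M a M = M b M` implies `a = b`. -/
def IsJTrivial (M : Type*) [Monoid M] : Prop :=
  ∀ a b : M,
    (Set.range fun p : M × M => p.1 * a * p.2) = (Set.range fun p : M × M => p.1 * b * p.2) →
      a = b

/-- A monoid is a block-group if every `R`-class and every `L`-class contains at most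
one idempotent. -/
def IsBlockGroup (M : Type*) [Monoid M] : Prop :=
  ∀ e f : M, IsIdempotentElem e → IsIdempotentElem f →
    (((Set.range fun x => e * x) = Set.range fun x => f * x) ∨
      ((Set.range fun x => x * e) = Set.range fun x => x * f)) → e = f

section Aux

variable {M : Type*} [Monoid M]

private lemma idem_pow' {e : M} (he : e * e = e) (n : ℕ) (hn : 1 ≤ n) : e ^ n = e := by
  induction n with
  | zero => omega
  | succ k ih =>
    rcases Nat.eq_zero_or_pos k with rfl | hk
    · exact pow_one e
    · rw [pow_succ, ih hk, he]

private lemma exists_idem_pow' [Finite M] (s : M) :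
    ∃ n, 1 ≤ n ∧ (s ^ n) * (s ^ n) = s ^ n := by
  obtain ⟨i, j, hij, h⟩ := Finite.exists_ne_map_eq_of_infinite (fun n : ℕ => s ^ n)
  wlog hlt : i < j generalizing i j
  · exact this j i hij.symm h.symm (by omega)
  have hstep : ∀ m, i ≤ m → s ^ (m + (j - i)) = s ^ m := by
    intro m hm
    obtain ⟨c, rfl⟩ := Nat.exists_eq_add_of_le hm
    have hbase : s ^ (i + (j - i)) = s ^ i := by
      rw [show i + (j - i) = j from by omega]; exact h.symm
    calc s ^ (i + c + (j - i)) = s ^ (i + (j - i)) * s ^ c := by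
          rw [← pow_add]; congr 1; omega
      _ = s ^ i * s ^ c := by rw [hbase]
      _ = s ^ (i + c) := by rw [← pow_add]
  have hmult : ∀ k m, i ≤ m → s ^ (m + k * (j - i)) = s ^ m := by
    intro k
    induction k with
    | zero => intro m hm; simp
    | succ l ih =>
      intro m hm
      calc s ^ (m + (l + 1) * (j - i)) = s ^ (m + l * (j - i) + (j - i)) := by
            congr 1; ring
        _ = s ^ (m + l * (j - i)) := hstep _ (by omega)
        _ = s ^ m := ih m hm
  have hd : 1 ≤ j - i := by omega
  have h1 : 1 ≤ (i + 1) * (j - i) := le_trans (by omega) (Nat.mul_le_mul (le_refl (i+1)) hd)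
  have h2 : i ≤ (i + 1) * (j - i) := le_trans (by omega) (Nat.mul_le_mul (le_refl (i+1)) hd)
  refine ⟨(i + 1) * (j - i), h1, ?_⟩
  rw [← pow_add]
  exact hmult (i + 1) ((i + 1) * (j - i)) h2

private lemma exists_idem_pow2 [Finite M] (s t : M) :
    ∃ N, 1 ≤ N ∧ (s ^ N) * (s ^ N) = s ^ N ∧ (t ^ N) * (t ^ N) = t ^ N := by
  obtain ⟨n1, h1, hs⟩ := exists_idem_pow' s
  obtain ⟨n2, h2, ht⟩ := exists_idem_pow' t
  refine ⟨n1 * n2, by nlinarith, ?_, ?_⟩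
  · rw [pow_mul, idem_pow' hs n2 h2]; exact hs
  · rw [mul_comm n1 n2, pow_mul, idem_pow' ht n1 h1]; exact ht

private lemma iter_sandwich {a s t : M} (h : a = s * a * t) (n : ℕ) :
    a = s ^ n * a * t ^ n := by
  induction n with
  | zero => simp
  | succ k ih =>
    rw [pow_succ, pow_succ']
    calc a = s ^ k * a * t ^ k := ih
      _ = s ^ k * (s * a * t) * t ^ k := by rw [← h]
      _ = s ^ k * s * a * (t * t ^ k) := by simp [mul_assoc]

private lemma absorb {a s t : M} (N : ℕ) (h : a = s * a * t)
    (hs : (s ^ N) * (s ^ N) = s ^ N) (ht : (t ^ N) * (t ^ N) = t ^ N) :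
    a * t ^ N = a ∧ s ^ N * a = a := by
  have hN := iter_sandwich h N
  constructor
  · calc a * t ^ N = s ^ N * a * t ^ N * t ^ N := by rw [← hN]
      _ = s ^ N * a * (t ^ N * t ^ N) := by rw [mul_assoc]
      _ = s ^ N * a * t ^ N := by rw [ht]
      _ = a := hN.symm
  · calc s ^ N * a = s ^ N * (s ^ N * a * t ^ N) := by rw [← hN]
      _ = s ^ N * s ^ N * a * t ^ N := by simp [mul_assoc]
      _ = s ^ N * a * t ^ N := by rw [hs]
      _ = a := hN.symm

end Aux

/-- Every finite monoid that is both `R`-trivial and a block-group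
is `J`-trivial. -/
theorem isJTrivial_of_isRTrivial_of_isBlockGroup
    (M : Type*) [Monoid M] [Finite M] (hR : IsRTrivial M) (hBG : IsBlockGroup M) :
    IsJTrivial M := by
  -- helper: mutual right-divisibility implies equality (R-triviality)
  have rEq : ∀ p q : M, (∃ m, p = q * m) → (∃ m, q = p * m) → p = q := by
    rintro p q ⟨m1, h1⟩ ⟨m2, h2⟩
    apply hR
    ext z
    simp only [Set.mem_range]
    constructor
    · rintro ⟨w, rfl⟩; exact ⟨m1 * w, by rw [← mul_assoc, ← h1]⟩
    · rintro ⟨w, rfl⟩; exact ⟨m2 * w, by rw [← mul_assoc, ← h2]⟩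
  -- helper: L-equivalent idempotents are equal (block-group)
  have lEq : ∀ e f : M, e * e = e → f * f = f →
      (∃ m, e = m * f) → (∃ m, f = m * e) → e = f := by
    rintro e f he hf ⟨m1, h1⟩ ⟨m2, h2⟩
    apply hBG e f he hf
    right
    ext z
    simp only [Set.mem_range]
    constructor
    · rintro ⟨w, rfl⟩; exact ⟨w * m1, by rw [mul_assoc, ← h1]⟩
    · rintro ⟨w, rfl⟩; exact ⟨w * m2, by rw [mul_assoc, ← h2]⟩
  intro a b hab
  have ha : ∃ p : M × M, p.1 * b * p.2 = a := by
    have h0 : a ∈ Set.range (fun p : M × M => p.1 * a * p.2) := ⟨(1, 1), by simp⟩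
    rw [hab] at h0; exact h0
  have hb : ∃ p : M × M, p.1 * a * p.2 = b := by
    have h0 : b ∈ Set.range (fun p : M × M => p.1 * b * p.2) := ⟨(1, 1), by simp⟩
    rw [← hab] at h0; exact h0
  obtain ⟨⟨x, y⟩, hxy⟩ := ha
  obtain ⟨⟨u, v⟩, huv⟩ := hb
  simp only at hxy huv
  -- sandwich identities
  have key1 : a = (x * u) * a * (v * y) := by
    calc a = x * b * y := hxy.symm
      _ = x * (u * a * v) * y := by rw [huv]
      _ = (x * u) * a * (v * y) := by simp [mul_assoc]
  have key2 : b = (u * x) * b * (y * v) := by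
    calc b = u * a * v := huv.symm
      _ = u * (x * b * y) * v := by rw [hxy]
      _ = (u * x) * b * (y * v) := by simp [mul_assoc]
  -- step 1: a * v = a, hence b = u * a
  obtain ⟨N, hN1, hsN, htN⟩ := exists_idem_pow2 (x * u) (v * y)
  obtain ⟨hat, -⟩ := absorb N key1 hsN htN
  obtain ⟨c, rfl⟩ : ∃ c, N = c + 1 := ⟨N - 1, by omega⟩
  have hav : a = a * v := by
    apply rEq a (a * v)
    · refine ⟨y * (v * y) ^ c, ?_⟩
      calc a = a * (v * y) ^ (c + 1) := hat.symm
        _ = a * ((v * y) * (v * y) ^ c) := by rw [pow_succ']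
        _ = a * v * (y * (v * y) ^ c) := by simp [mul_assoc]
    · exact ⟨v, rfl⟩
  have hba : b = u * a := by rw [← huv, mul_assoc, ← hav]
  -- step 2: b * y = b, hence a = x * b
  obtain ⟨N', hN1', hsN', htN'⟩ := exists_idem_pow2 (u * x) (y * v)
  obtain ⟨hbt, -⟩ := absorb N' key2 hsN' htN'
  obtain ⟨c', rfl⟩ : ∃ c', N' = c' + 1 := ⟨N' - 1, by omega⟩
  have hby : b = b * y := by
    apply rEq b (b * y)
    · refine ⟨v * (y * v) ^ c', ?_⟩
      calc b = b * (y * v) ^ (c' + 1) := hbt.symm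
        _ = b * ((y * v) * (y * v) ^ c') := by rw [pow_succ']
        _ = b * y * (v * (y * v) ^ c') := by simp [mul_assoc]
    · exact ⟨y, rfl⟩
  have hab2 : a = x * b := by rw [← hxy, mul_assoc, ← hby]
  -- now a L b : a = x * b, b = u * a
  obtain ⟨K, hK1, heI, hfI⟩ := exists_idem_pow2 (x * u) (u * x)
  set e := (x * u) ^ K with hedef
  set f := (u * x) ^ K with hfdef
  have hxua : a = (x * u) * a := by
    calc a = x * b := hab2
      _ = x * (u * a) := by rw [← hba]
      _ = (x * u) * a := (mul_assoc _ _ _).symm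
  have huxb : b = (u * x) * b := by
    calc b = u * a := hba
      _ = u * (x * b) := by rw [← hab2]
      _ = (u * x) * b := (mul_assoc _ _ _).symm
  have hea : e * a = a :=
    (absorb K (t := (1 : M)) (by simpa using hxua) heI (by simp)).2
  have hfb : f * b = b :=
    (absorb K (t := (1 : M)) (by simpa using huxb) hfI (by simp)).2
  obtain ⟨k, hk⟩ : ∃ k, K = k + 1 := ⟨K - 1, by omega⟩
  have hex : e = e * x := by
    apply rEq e (e * x)
    · refine ⟨u * (x * u) ^ k, ?_⟩
      calc e = e * e := heI.symm
        _ = e * ((x * u) * (x * u) ^ k) := by rw [hedef, hk, pow_succ']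
        _ = e * x * (u * (x * u) ^ k) := by simp [mul_assoc]
    · exact ⟨x, rfl⟩
  have hfu : f = f * u := by
    apply rEq f (f * u)
    · refine ⟨x * (u * x) ^ k, ?_⟩
      calc f = f * f := hfI.symm
        _ = f * ((u * x) * (u * x) ^ k) := by rw [hfdef, hk, pow_succ']
        _ = f * u * (x * (u * x) ^ k) := by simp [mul_assoc]
    · exact ⟨u, rfl⟩
  have hcomm_u : u * (x * u) ^ K = (u * x) ^ K * u :=
    (SemiconjBy.pow_right (by simp [SemiconjBy, mul_assoc]) K)
  have hcomm_x : x * (u * x) ^ K = (x * u) ^ K * x :=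
    (SemiconjBy.pow_right (by simp [SemiconjBy, mul_assoc]) K)
  have hf_ue : f = u * e := by
    calc f = f * u := hfu
      _ = u * e := by rw [hedef, ← hcomm_u]
  have he_xf : e = x * f := by
    calc e = e * x := hex
      _ = x * f := by rw [hfdef, ← hcomm_x]
  have hef : e = f := lEq e f heI hfI ⟨x, he_xf⟩ ⟨u, hf_ue⟩
  calc a = e * a := hea.symm
    _ = e * (x * b) := by rw [← hab2]
    _ = (e * x) * b := (mul_assoc _ _ _).symm
    _ = e * b := by rw [← hex]
    _ = f * b := by rw [hef]
    _ = b := hfb
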